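/- Let 1 ≤ p < ∞, let K be an n×d real matrix with rows K_1,…,K_n, and let ε > 0. Then the set S = { i ∈ {1,…,n} : σ^{(p)}_i(K) ≥ ε } of rows whose ℓ_p-sensitivity is at least ε satisfies |S| ≤ d/ε when 1 ≤ p ≤ 2, and |S| ≤ d^{p/2}/ε when p > 2. -/

import Mathlib

set_option maxHeartbeats 1000000


/-- The `ℓ_p`-sensitivity of row `j` of an `n × d` real matrix `K`:
`σ^{(p)}_j(K) = sup { |⟨K_j, v⟩|^p / ∑_ℓ |⟨K_ℓ, v⟩|^p : v ∈ ℝ^d, Kv ≠ 0 }`. -/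
noncomputable def lpSens {n d : ℕ} (p : ℝ) (K : Matrix (Fin n) (Fin d) ℝ) (j : Fin n) : ℝ :=
  sSup {x : ℝ | ∃ v : Fin d → ℝ, K.mulVec v ≠ 0 ∧
    x = |∑ i, K j i * v i| ^ p / ∑ ℓ, |∑ i, K ℓ i * v i| ^ p}

open Finset

notation "⟪" x ", " y "⟫" => inner (𝕜 := ℝ) x y

lemma trace_sq_le_of_dot {ι : Type*} [Fintype ι] {d : ℕ}
    (w g : ι → EuclideanSpace ℝ (Fin d)) (N : ι → ι → ℝ)
    (hN : ∀ i l, N i l = ⟪w i, g l⟫) :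
    (∑ i, N i i) ^ 2 ≤ (d : ℝ) * ∑ i, ∑ l, (N i l) ^ 2 := by
  classical
  set E := EuclideanSpace ℝ ι
  let Φ : EuclideanSpace ℝ (Fin d) →ₗ[ℝ] E :=
    { toFun := fun u => (WithLp.toLp 2 (fun i => ⟪w i, u⟫) : EuclideanSpace ℝ ι)
      map_add' := by
        intro x y; ext i
        show ⟪w i, x + y⟫ = ⟪w i, x⟫ + ⟪w i, y⟫
        exact inner_add_right _ _ _
      map_smul' := by
        intro c x; ext i
        show ⟪w i, c • x⟫ = c * ⟪w i, x⟫
        exact real_inner_smul_right _ _ _ }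
  let U := LinearMap.range Φ
  have hrle : Module.finrank ℝ U ≤ d := by
    refine (LinearMap.finrank_range_le Φ).trans_eq ?_
    simp [finrank_euclideanSpace_fin]
  set r := Module.finrank ℝ U with hr
  let b := stdOrthonormalBasis ℝ U
  have hcol : ∀ l, ((WithLp.toLp 2 fun i => N i l) : E) ∈ U := by
    intro l
    refine ⟨g l, ?_⟩
    ext i
    simp [Φ, hN]
  let y : ι → U := fun l => ⟨(WithLp.toLp 2 fun i => N i l : E), hcol l⟩
  let c : ι → Fin r → ℝ := fun l j => b.repr (y l) j
  let f : ι → Fin r → ℝ := fun l j => ⟪EuclideanSpace.single l (1:ℝ), (b j : E)⟫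
  have hsum_repr : ∀ l, ((y l : E)) = ∑ j, c l j • (b j : E) := by
    intro l
    have := b.sum_repr (y l)
    calc ((y l : E)) = ((∑ j, b.repr (y l) j • b j : U) : E) := by rw [this]
    _ = ∑ j, c l j • (b j : E) := by
        push_cast
        rfl
  have hdiag : ∀ l, N l l = ∑ j, c l j * f l j := by
    intro l
    have h1 : N l l = ⟪EuclideanSpace.single l (1:ℝ), (y l : E)⟫ := by
      rw [EuclideanSpace.inner_single_left]
      simp
      rfl
    rw [h1, hsum_repr l, inner_sum]
    refine Finset.sum_congr rfl fun j _ => ?_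
    rw [real_inner_smul_right]
  have hc : ∀ l, ∑ j, (c l j)^2 = ∑ i, (N i l)^2 := by
    intro l
    have h1 : ∑ j, (c l j)^2 = ⟪b.repr (y l), b.repr (y l)⟫ := by
      rw [PiLp.inner_apply]
      refine (Finset.sum_congr rfl fun j _ => ?_).symm
      rw [RCLike.inner_apply, conj_trivial, ← sq]
    have h2 : ⟪b.repr (y l), b.repr (y l)⟫ = ⟪(y l : E), (y l : E)⟫ := by
      rw [b.repr.inner_map_map]
      rfl
    rw [h1, h2, PiLp.inner_apply]
    refine Finset.sum_congr rfl fun i _ => ?_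
    rw [RCLike.inner_apply, conj_trivial, ← sq]
  have hf : ∀ j, ∑ l, (f l j)^2 = 1 := by
    intro j
    have h1 : ∀ l, f l j = (b j : E) l := by
      intro l
      simp only [f, EuclideanSpace.inner_single_left, conj_trivial, one_mul]
    have h2 : ∑ l, ((b j : E) l)^2 = ⟪(b j : E), (b j : E)⟫ := by
      rw [PiLp.inner_apply]
      refine (Finset.sum_congr rfl fun i _ => ?_).symm
      rw [RCLike.inner_apply, conj_trivial, ← sq]
    have h3 : ⟪(b j : E), (b j : E)⟫ = 1 := by
      have := b.orthonormal
      rw [orthonormal_iff_ite] at this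
      have h4 := this j j
      rw [if_pos rfl] at h4
      exact h4
    simp only [h1, h2, h3]
  have htr : ∑ l, N l l = ∑ q ∈ (univ ×ˢ univ : Finset (ι × Fin r)), c q.1 q.2 * f q.1 q.2 := by
    rw [Finset.sum_product]
    exact Finset.sum_congr rfl fun l _ => hdiag l
  have hCS := Finset.sum_mul_sq_le_sq_mul_sq (univ ×ˢ univ : Finset (ι × Fin r))
      (fun q => c q.1 q.2) (fun q => f q.1 q.2)
  rw [← htr] at hCS
  have hA : ∑ q ∈ (univ ×ˢ univ : Finset (ι × Fin r)), (c q.1 q.2)^2 = ∑ i, ∑ l, (N i l)^2 := by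
    rw [Finset.sum_product]
    calc ∑ l, ∑ j, (c l j)^2 = ∑ l, ∑ i, (N i l)^2 := Finset.sum_congr rfl fun l _ => hc l
    _ = ∑ i, ∑ l, (N i l)^2 := Finset.sum_comm
  have hB : ∑ q ∈ (univ ×ˢ univ : Finset (ι × Fin r)), (f q.1 q.2)^2 = (r : ℝ) := by
    rw [Finset.sum_product]
    rw [Finset.sum_comm]
    calc ∑ j, ∑ l, (f l j)^2 = ∑ j : Fin r, (1:ℝ) := Finset.sum_congr rfl fun j _ => hf j
    _ = (r : ℝ) := by simp
  rw [hA, hB] at hCS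
  have hS : (0:ℝ) ≤ ∑ i, ∑ l, (N i l)^2 :=
    Finset.sum_nonneg fun i _ => Finset.sum_nonneg fun l _ => sq_nonneg _
  calc (∑ i, N i i)^2 ≤ (∑ i, ∑ l, (N i l)^2) * (r : ℝ) := hCS
  _ ≤ (∑ i, ∑ l, (N i l)^2) * (d : ℝ) := by
      exact mul_le_mul_of_nonneg_left (by exact_mod_cast hrle) hS
  _ = (d : ℝ) * ∑ i, ∑ l, (N i l)^2 := mul_comm _ _


/-- The set of rows with `ℓ_p`-sensitivity at least `ε` has size at most `d/ε` if `1 ≤ p ≤ 2`,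
and at most `d^{p/2}/ε` if `p > 2`. -/
theorem card_large_lpSens_le {n d : ℕ} (p : ℝ) (hp : 1 ≤ p)
    (K : Matrix (Fin n) (Fin d) ℝ) (ε : ℝ) (hε : 0 < ε) :
    (p ≤ 2 →
      ((Finset.univ.filter fun i : Fin n => ε ≤ lpSens p K i).card : ℝ) ≤ (d : ℝ) / ε) ∧
    (2 < p →
      ((Finset.univ.filter fun i : Fin n => ε ≤ lpSens p K i).card : ℝ) ≤
        (d : ℝ) ^ (p / 2) / ε) := by
  classical
  have hp0 : 0 < p := lt_of_lt_of_le one_pos hp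
  have hp0' : p ≠ 0 := ne_of_gt hp0
  set F : Finset (Fin n) := Finset.univ.filter fun i : Fin n => ε ≤ lpSens p K i with hF
  -- basic notation
  obtain ⟨dt, hdt⟩ : ∃ dt : Fin n → (Fin d → ℝ) → ℝ, dt = fun j u => ∑ k, K j k * u k :=
    ⟨_, rfl⟩
  obtain ⟨D, hDdef⟩ : ∃ D : (Fin d → ℝ) → ℝ, D = fun u => ∑ ℓ, |dt ℓ u| ^ p := ⟨_, rfl⟩
  -- positivity of denominators
  have hDpos : ∀ u : Fin d → ℝ, K.mulVec u ≠ 0 → 0 < D u := by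
    intro u hu
    obtain ⟨ℓ, hℓ⟩ := Function.ne_iff.mp hu
    have hℓ' : dt ℓ u ≠ 0 := by
      simpa [Matrix.mulVec, dotProduct, hdt] using hℓ
    rw [hDdef]
    refine Finset.sum_pos' (fun l _ => Real.rpow_nonneg (abs_nonneg _) p) ⟨ℓ, Finset.mem_univ ℓ, ?_⟩
    exact Real.rpow_pos_of_pos (abs_pos.mpr hℓ') p
  have hDnonneg : ∀ u, (0:ℝ) ≤ D u := by
    intro u
    rw [hDdef]
    exact Finset.sum_nonneg fun l _ => Real.rpow_nonneg (abs_nonneg _) p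
  -- bddAbove
  have hbdd : ∀ j : Fin n, BddAbove {x : ℝ | ∃ v : Fin d → ℝ, K.mulVec v ≠ 0 ∧
      x = |∑ i, K j i * v i| ^ p / ∑ ℓ, |∑ i, K ℓ i * v i| ^ p} := by
    intro j
    refine ⟨1, fun x hx => ?_⟩
    obtain ⟨v, hv, rfl⟩ := hx
    have h1 : (0:ℝ) < ∑ ℓ, |∑ i, K ℓ i * v i| ^ p := by
      have := hDpos v hv
      rw [hDdef, hdt] at this
      exact this
    rw [div_le_one h1]
    exact Finset.single_le_sum (f := fun ℓ => |∑ i, K ℓ i * v i| ^ p)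
      (fun l _ => Real.rpow_nonneg (abs_nonneg _) p) (Finset.mem_univ j)
  -- upper bound property of the sup
  have hub : ∀ (j : Fin n) (u : Fin d → ℝ), K.mulVec u ≠ 0 →
      |dt j u| ^ p / D u ≤ lpSens p K j := by
    intro j u hu
    exact le_csSup (hbdd j) ⟨u, hu, by rw [hdt, hDdef, hdt]⟩
  -- near-maximizers
  have hex : ∀ j : Fin n, ε ≤ lpSens p K j → ∀ δ : ℝ, 0 < δ →
      ∃ u : Fin d → ℝ, K.mulVec u ≠ 0 ∧ lpSens p K j - δ < |dt j u| ^ p / D u := by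
    intro j hj δ hδ
    have hne : {x : ℝ | ∃ v : Fin d → ℝ, K.mulVec v ≠ 0 ∧
        x = |∑ i, K j i * v i| ^ p / ∑ ℓ, |∑ i, K ℓ i * v i| ^ p}.Nonempty := by
      by_contra h
      rw [Set.not_nonempty_iff_eq_empty] at h
      have : lpSens p K j = 0 := by simp only [lpSens, h, Real.sSup_empty]
      rw [this] at hj; linarith
    have hlt : lpSens p K j - δ < lpSens p K j := by linarith
    obtain ⟨x, hx, hx2⟩ := exists_lt_of_lt_csSup hne (by simp only [lpSens] at hlt ⊢; exact hlt)
    obtain ⟨u, hu, rfl⟩ := hx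
    refine ⟨u, hu, ?_⟩
    rw [hdt, hDdef, hdt]
    exact hx2
  -- trivial case: F empty
  obtain hm0 | hm := Nat.eq_zero_or_pos F.card
  · rw [hm0]
    constructor <;> intro _ <;> norm_num <;> positivity
  -- main case
  have hmR : (0:ℝ) < (F.card : ℝ) := by exact_mod_cast hm
  have hcore : ∀ t : ℝ, 0 < t → t < ε →
      ∃ N : ↥F → ↥F → ℝ,
        ((F.card : ℝ))^2 ≤ (d:ℝ) * ∑ i, ∑ l, (N i l)^2 ∧
        (∀ i l, |N i l| ^ p ≤ ε / t) ∧
        (∀ i, ∑ l, |N i l| ^ p ≤ 1 / t) := by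
    intro t ht htε
    have hmem : ∀ i : ↥F, ε ≤ lpSens p K ↑i := fun i => (Finset.mem_filter.mp i.2).2
    have hδ : 0 < ε - t := by linarith
    choose v hv1 hv2 using fun i : ↥F => hex ↑i (hmem i) (ε - t) hδ
    obtain ⟨a, ha⟩ : ∃ a : ↥F → ℝ, a = fun i : ↥F => dt ↑i (v i) := ⟨_, rfl⟩
    obtain ⟨x, hx⟩ : ∃ x : ↥F → ℝ, x = fun i => |a i| ^ p / D (v i) := ⟨_, rfl⟩
    have hDvpos : ∀ i, 0 < D (v i) := fun i => hDpos (v i) (hv1 i)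
    have hxgt : ∀ i : ↥F, lpSens p K ↑i - (ε - t) < x i := by
      intro i
      rw [hx, ha]
      exact hv2 i
    have hxt : ∀ i, t < x i := by
      intro i
      have h1 := hmem i
      have h2 := hxgt i
      linarith
    have hxpos : ∀ i, 0 < x i := fun i => lt_trans ht (hxt i)
    have hxle : ∀ i : ↥F, x i ≤ lpSens p K ↑i := by
      intro i
      rw [hx, ha]
      exact hub ↑i (v i) (hv1 i)
    have habsp : ∀ i, |a i| ^ p = x i * D (v i) := by
      intro i
      have hxi : x i = |a i| ^ p / D (v i) := by rw [hx]
      exact ((eq_div_iff (ne_of_gt (hDvpos i))).mp hxi).symm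
    have hapos : ∀ i, 0 < |a i| ^ p := by
      intro i
      rw [habsp i]
      exact mul_pos (hxpos i) (hDvpos i)
    have hane : ∀ i, a i ≠ 0 := by
      intro i hia
      have h1 := hapos i
      rw [hia, abs_zero, Real.zero_rpow hp0'] at h1
      exact lt_irrefl _ h1
    obtain ⟨c, hc⟩ : ∃ c : ↥F → ℝ, c = fun i => (x i) ^ p⁻¹ := ⟨_, rfl⟩
    have hcpos : ∀ i, 0 < c i := by
      intro i
      rw [hc]
      exact Real.rpow_pos_of_pos (hxpos i) _
    have hcp : ∀ i, (c i) ^ p = x i := by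
      intro i
      rw [hc]
      show ((x i) ^ p⁻¹) ^ p = x i
      rw [← Real.rpow_mul (hxpos i).le, inv_mul_cancel₀ hp0', Real.rpow_one]
    obtain ⟨N, hN⟩ : ∃ N : ↥F → ↥F → ℝ, N = fun i l => (c i / c l) * (dt ↑l (v i) / a i) :=
      ⟨_, rfl⟩
    -- the key entrywise identity
    have hNp : ∀ i l : ↥F, |N i l| ^ p = |dt ↑l (v i)| ^ p / (x l * D (v i)) := by
      intro i l
      have h1 : |N i l| = (c i / c l) * (|dt ↑l (v i)| / |a i|) := by
        rw [hN]
        show |c i / c l * (dt ↑l (v i) / a i)| = _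
        rw [abs_mul, abs_div, abs_div, abs_of_pos (hcpos i), abs_of_pos (hcpos l)]
      rw [h1, Real.mul_rpow (div_pos (hcpos i) (hcpos l)).le
          (div_nonneg (abs_nonneg _) (abs_nonneg _)),
        Real.div_rpow (hcpos i).le (hcpos l).le,
        Real.div_rpow (abs_nonneg _) (abs_nonneg _), hcp, hcp, habsp i]
      have hx0 : x i ≠ 0 := ne_of_gt (hxpos i)
      have hxl0 : x l ≠ 0 := ne_of_gt (hxpos l)
      have hD0 : D (v i) ≠ 0 := ne_of_gt (hDvpos i)
      field_simp
    refine ⟨N, ?_, ?_, ?_⟩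
    · -- trace bound
      have hdiag : ∀ i, N i i = 1 := by
        intro i
        rw [hN]
        show c i / c i * (dt ↑i (v i) / a i) = 1
        rw [ha]
        show c i / c i * (dt ↑i (v i) / dt ↑i (v i)) = 1
        have hai : dt ↑i (v i) ≠ 0 := by
          have := hane i
          rw [ha] at this
          exact this
        rw [div_self (ne_of_gt (hcpos i)), div_self hai, one_mul]
      have htr : ∑ i : ↥F, N i i = (F.card : ℝ) := by
        rw [Finset.sum_congr rfl fun i _ => hdiag i]
        simp [Finset.card_univ]
      obtain ⟨ww, hww⟩ : ∃ ww : ↥F → EuclideanSpace ℝ (Fin d),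
          ww = fun i => WithLp.toLp 2 fun k => (c i / a i) * v i k := ⟨_, rfl⟩
      obtain ⟨gg, hgg⟩ : ∃ gg : ↥F → EuclideanSpace ℝ (Fin d),
          gg = fun l => WithLp.toLp 2 fun k => (c l)⁻¹ * K ↑l k := ⟨_, rfl⟩
      have hfac : ∀ i l : ↥F, N i l = ⟪ww i, gg l⟫ := by
        intro i l
        rw [PiLp.inner_apply]
        simp only [RCLike.inner_apply, conj_trivial, hww, hgg, PiLp.toLp_apply]
        simp only [mul_comm ((c l)⁻¹ * _)]
        have h1 : ∑ k, (c i / a i * v i k) * ((c l)⁻¹ * K ↑l k)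
            = (c i / a i) * (c l)⁻¹ * ∑ k, K ↑l k * v i k := by
          rw [Finset.mul_sum]
          exact Finset.sum_congr rfl fun k _ => by ring
        rw [h1, hN]
        show c i / c l * (dt ↑l (v i) / a i) = c i / a i * (c l)⁻¹ * ∑ k, K ↑l k * v i k
        rw [hdt]
        simp only [div_eq_mul_inv]
        ring
      have h2 := trace_sq_le_of_dot ww gg N hfac
      rw [htr] at h2
      exact h2
    · -- entry bound
      intro i l
      rw [hNp i l]
      have h2 : |dt ↑l (v i)| ^ p / D (v i) ≤ lpSens p K ↑l := hub ↑l (v i) (hv1 i)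
      have h3 : |dt ↑l (v i)| ^ p / (x l * D (v i)) = (|dt ↑l (v i)| ^ p / D (v i)) / x l := by
        rw [div_div]
        rw [mul_comm]
      rw [h3]
      have h4 : (|dt ↑l (v i)| ^ p / D (v i)) / x l ≤ lpSens p K ↑l / x l :=
        (div_le_div_iff_of_pos_right (hxpos l)).mpr h2
      refine h4.trans ?_
      rw [div_le_div_iff₀ (hxpos l) ht]
      have h5 := hxgt l
      have h6 := hmem l
      nlinarith [hxle l]
    · -- row bound
      intro i
      have h1 : ∀ l : ↥F, |N i l| ^ p ≤ |dt ↑l (v i)| ^ p / (t * D (v i)) := by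
        intro l
        rw [hNp i l]
        apply div_le_div_of_nonneg_left (Real.rpow_nonneg (abs_nonneg _) p)
          (mul_pos ht (hDvpos i))
        exact mul_le_mul_of_nonneg_right (hxt l).le (hDvpos i).le
      calc ∑ l : ↥F, |N i l| ^ p ≤ ∑ l : ↥F, |dt ↑l (v i)| ^ p / (t * D (v i)) :=
            Finset.sum_le_sum fun l _ => h1 l
      _ = (∑ l : ↥F, |dt ↑l (v i)| ^ p) / (t * D (v i)) := by rw [← Finset.sum_div]
      _ ≤ D (v i) / (t * D (v i)) := by
          refine (div_le_div_iff_of_pos_right (mul_pos ht (hDvpos i))).mpr ?_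
          rw [Finset.sum_coe_sort F (fun l => |dt l (v i)| ^ p), hDdef]
          exact Finset.sum_le_sum_of_subset_of_nonneg (Finset.subset_univ F)
            (fun l _ _ => Real.rpow_nonneg (abs_nonneg _) p)
      _ = 1 / t := by
          rw [mul_comm, ← div_div, div_self (ne_of_gt (hDvpos i))]
  constructor
  · -- case p ≤ 2
    intro hp2
    have hq : 0 ≤ 2/p - 1 := by
      rw [sub_nonneg, le_div_iff₀ hp0]
      linarith
    have step : ∀ t : ℝ, 0 < t → t < ε →
        (F.card : ℝ) * t ^ (2/p) ≤ (d:ℝ) * ε ^ (2/p - 1) := by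
      intro t ht htε
      obtain ⟨N, htrace, hentry, hrow⟩ := hcore t ht htε
      have hBnn : (0:ℝ) ≤ (ε/t) ^ (2/p-1) := Real.rpow_nonneg (by positivity) _
      have hsq : ∀ i l : ↥F, (N i l)^2 ≤ (ε/t) ^ (2/p - 1) * |N i l| ^ p := by
        intro i l
        have e1 : p * (2/p) = 2 := by field_simp
        have h0 : (N i l)^2 = (|N i l| ^ p) ^ (2/p) := by
          rw [← Real.rpow_mul (abs_nonneg _), e1,
            show ((2:ℝ)) = ((2:ℕ):ℝ) by norm_num, Real.rpow_natCast, sq_abs]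
        rcases eq_or_lt_of_le (Real.rpow_nonneg (abs_nonneg _) p : (0:ℝ) ≤ |N i l| ^ p)
          with hy | hy
        · rw [h0, ← hy, Real.zero_rpow (by positivity), mul_zero]
        · have h2 : (|N i l|^p)^(2/p) = (|N i l|^p)^(2/p-1) * (|N i l|^p) := by
            rw [← Real.rpow_add_one (ne_of_gt hy) (2/p-1)]
            congr 1
            ring
          rw [h0, h2]
          exact mul_le_mul_of_nonneg_right (Real.rpow_le_rpow hy.le (hentry i l) hq) hy.le
      have hFrob : ∑ i : ↥F, ∑ l : ↥F, (N i l)^2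
          ≤ (F.card : ℝ) * ((ε/t)^(2/p-1) * (1/t)) := by
        calc ∑ i : ↥F, ∑ l : ↥F, (N i l)^2 ≤ ∑ _i : ↥F, (ε/t)^(2/p-1) * (1/t) := by
              refine Finset.sum_le_sum fun i _ => ?_
              calc ∑ l : ↥F, (N i l)^2 ≤ ∑ l : ↥F, (ε/t)^(2/p-1) * |N i l|^p :=
                    Finset.sum_le_sum fun l _ => hsq i l
              _ = (ε/t)^(2/p-1) * ∑ l : ↥F, |N i l|^p := by rw [← Finset.mul_sum]
              _ ≤ (ε/t)^(2/p-1) * (1/t) := mul_le_mul_of_nonneg_left (hrow i) hBnn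
        _ = (F.card : ℝ) * ((ε/t)^(2/p-1) * (1/t)) := by
              rw [Finset.sum_const, Finset.card_univ, Fintype.card_coe, nsmul_eq_mul]
      have hM2 : ((F.card:ℝ))^2 ≤ (d:ℝ) * ((F.card : ℝ) * ((ε/t)^(2/p-1) * (1/t))) :=
        htrace.trans (mul_le_mul_of_nonneg_left hFrob (Nat.cast_nonneg d))
      have hM : (F.card:ℝ) ≤ (d:ℝ) * ((ε/t)^(2/p-1) * (1/t)) := by
        have h5 : (F.card:ℝ) * (F.card:ℝ)
            ≤ (F.card:ℝ) * ((d:ℝ) * ((ε/t)^(2/p-1) * (1/t))) := by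
          calc (F.card:ℝ) * (F.card:ℝ) = ((F.card:ℝ))^2 := (sq _).symm
          _ ≤ (d:ℝ) * ((F.card : ℝ) * ((ε/t)^(2/p-1) * (1/t))) := hM2
          _ = (F.card:ℝ) * ((d:ℝ) * ((ε/t)^(2/p-1) * (1/t))) := by ring
        exact le_of_mul_le_mul_left h5 hmR
      calc (F.card:ℝ) * t^(2/p) ≤ ((d:ℝ) * ((ε/t)^(2/p-1) * (1/t))) * t^(2/p) :=
            mul_le_mul_of_nonneg_right hM (Real.rpow_nonneg ht.le _)
      _ = (d:ℝ) * ε^(2/p-1) := by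
            rw [Real.div_rpow hε.le ht.le]
            rw [show t ^ (2/p) = t^(2/p-1) * t by
              rw [← Real.rpow_add_one (ne_of_gt ht) (2/p-1)]
              congr 1
              ring]
            have htp : t^(2/p-1) ≠ 0 := ne_of_gt (Real.rpow_pos_of_pos ht _)
            field_simp
            try ring
    have hlim : (F.card:ℝ) * ε ^ (2/p) ≤ (d:ℝ) * ε ^ (2/p-1) := by
      have hcont : Filter.Tendsto (fun t : ℝ => (F.card:ℝ) * t ^ (2/p))
          (nhdsWithin ε (Set.Iio ε)) (nhds ((F.card:ℝ) * ε ^ (2/p))) := by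
        apply Filter.Tendsto.const_mul
        exact ((Real.continuousAt_rpow_const ε (2/p) (Or.inl (ne_of_gt hε))).tendsto).mono_left
          nhdsWithin_le_nhds
      refine le_of_tendsto hcont ?_
      filter_upwards [Ioo_mem_nhdsLT_of_mem (show ε ∈ Set.Ioc 0 ε from ⟨hε, le_refl ε⟩)]
        with t htt
      exact step t htt.1 htt.2
    rw [le_div_iff₀ hε]
    have hP := Real.rpow_pos_of_pos hε (2/p)
    have key : ((F.card:ℝ) * ε) * ε^(2/p) ≤ (d:ℝ) * ε^(2/p) := by
      have hε2 : ε ^ (2/p - 1) = ε^(2/p) / ε := by rw [Real.rpow_sub hε, Real.rpow_one]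
      calc ((F.card:ℝ) * ε) * ε^(2/p) = ((F.card:ℝ) * ε^(2/p)) * ε := by ring
      _ ≤ ((d:ℝ) * ε^(2/p-1)) * ε := mul_le_mul_of_nonneg_right hlim hε.le
      _ = (d:ℝ) * ε^(2/p) := by
          rw [hε2]
          field_simp
    exact le_of_mul_le_mul_right key hP
  · -- case 2 < p
    intro hp2
    have hq2 : (1:ℝ) ≤ p/2 := by linarith
    have h2p : (0:ℝ) < 2/p := by positivity
    have step : ∀ t : ℝ, 0 < t → t < ε → (F.card:ℝ) * t ≤ (d:ℝ)^(p/2) := by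
      intro t ht htε
      obtain ⟨N, htrace, hentry, hrow⟩ := hcore t ht htε
      have hP : (0:ℝ) < (F.card:ℝ)^(2/p) := Real.rpow_pos_of_pos hmR _
      have hT : (0:ℝ) < t^(2/p) := Real.rpow_pos_of_pos ht _
      have hpm : ∀ i : ↥F, ∑ l : ↥F, (N i l)^2
          ≤ ((F.card:ℝ) / (F.card:ℝ)^(2/p)) * (1 / t^(2/p)) := by
        intro i
        have hw : ∑ _l : ↥F, (1/(F.card:ℝ)) = 1 := by
          rw [Finset.sum_const, Finset.card_univ, Fintype.card_coe, nsmul_eq_mul]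
          field_simp
        have h1 := Real.rpow_arith_mean_le_arith_mean_rpow Finset.univ
          (fun _ : ↥F => 1/(F.card:ℝ)) (fun l => (N i l)^2)
          (fun l _ => by positivity) hw (fun l _ => sq_nonneg _) hq2
        have hconv : ∀ l : ↥F, (((N i l)^2 : ℝ))^(p/2) = |N i l|^p := by
          intro l
          rw [← sq_abs, ← Real.rpow_natCast |N i l| 2, ← Real.rpow_mul (abs_nonneg _)]
          congr 1
          push_cast
          ring
        have hrhs : ∑ l : ↥F, (1/(F.card:ℝ)) * (((N i l)^2 : ℝ))^(p/2)
            ≤ (1/(F.card:ℝ)) * (1/t) := by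
          rw [Finset.sum_congr rfl fun l _ => by rw [hconv l], ← Finset.mul_sum]
          exact mul_le_mul_of_nonneg_left (hrow i) (by positivity)
        have hS0 : (0:ℝ) ≤ (1/(F.card:ℝ)) * ∑ l : ↥F, (N i l)^2 := by
          have : (0:ℝ) ≤ ∑ l : ↥F, (N i l)^2 := Finset.sum_nonneg fun l _ => sq_nonneg _
          positivity
        have hlhs : ((1/(F.card:ℝ)) * ∑ l : ↥F, (N i l)^2)^(p/2)
            ≤ (1/(F.card:ℝ)) * (1/t) := by
          refine le_trans ?_ (le_trans h1 hrhs)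
          rw [← Finset.mul_sum]
        have h2 : (1/(F.card:ℝ)) * ∑ l : ↥F, (N i l)^2
            ≤ ((1/(F.card:ℝ)) * (1/t))^(2/p) := by
          have h3 := Real.rpow_le_rpow (Real.rpow_nonneg hS0 _) hlhs h2p.le
          rwa [← Real.rpow_mul hS0, show (p/2)*(2/p) = 1 by field_simp, Real.rpow_one] at h3
        have h4 := mul_le_mul_of_nonneg_left h2 hmR.le
        rw [← mul_assoc, mul_one_div_cancel (ne_of_gt hmR), one_mul] at h4
        refine h4.trans ?_
        rw [Real.mul_rpow (by positivity) (by positivity), one_div,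
          Real.inv_rpow hmR.le, one_div, Real.inv_rpow ht.le]
        rw [div_eq_mul_inv, div_eq_mul_inv, one_div]
        exact le_of_eq (by ring)
      have hFrob : ∑ i : ↥F, ∑ l : ↥F, (N i l)^2
          ≤ (F.card:ℝ) * (((F.card:ℝ) / (F.card:ℝ)^(2/p)) * (1 / t^(2/p))) := by
        calc ∑ i : ↥F, ∑ l : ↥F, (N i l)^2
            ≤ ∑ _i : ↥F, ((F.card:ℝ) / (F.card:ℝ)^(2/p)) * (1 / t^(2/p)) :=
              Finset.sum_le_sum fun i _ => hpm i
        _ = (F.card:ℝ) * (((F.card:ℝ) / (F.card:ℝ)^(2/p)) * (1 / t^(2/p))) := by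
              rw [Finset.sum_const, Finset.card_univ, Fintype.card_coe, nsmul_eq_mul]
      have h := htrace.trans (mul_le_mul_of_nonneg_left hFrob (Nat.cast_nonneg d))
      have hPT : ((F.card:ℝ))^2 * ((F.card:ℝ)^(2/p) * t^(2/p))
          ≤ (d:ℝ) * ((F.card:ℝ))^2 := by
        calc ((F.card:ℝ))^2 * ((F.card:ℝ)^(2/p) * t^(2/p))
            ≤ ((d:ℝ) * ((F.card:ℝ) * (((F.card:ℝ) / (F.card:ℝ)^(2/p)) * (1 / t^(2/p)))))
              * ((F.card:ℝ)^(2/p) * t^(2/p)) :=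
              mul_le_mul_of_nonneg_right h (by positivity)
        _ = (d:ℝ) * ((F.card:ℝ))^2 := by
              have hP' : ((F.card:ℝ))^(2/p) ≠ 0 := ne_of_gt hP
              have hT' : t^(2/p) ≠ 0 := ne_of_gt hT
              field_simp
              try ring
              try tauto
      have hM2 : (0:ℝ) < ((F.card:ℝ))^2 := by positivity
      have hPT2 : (F.card:ℝ)^(2/p) * t^(2/p) ≤ (d:ℝ) := by
        have := (mul_le_mul_iff_right₀ hM2).mp
          (by calc ((F.card:ℝ))^2 * ((F.card:ℝ)^(2/p) * t^(2/p))
                ≤ (d:ℝ) * ((F.card:ℝ))^2 := hPT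
              _ = ((F.card:ℝ))^2 * (d:ℝ) := by ring)
        exact this
      have hmt : ((F.card:ℝ) * t)^(2/p) ≤ (d:ℝ) := by
        rw [Real.mul_rpow hmR.le ht.le]
        exact hPT2
      calc (F.card:ℝ) * t = (((F.card:ℝ) * t)^(2/p))^(p/2) := by
            rw [← Real.rpow_mul (by positivity), show (2/p)*(p/2) = 1 by field_simp,
              Real.rpow_one]
      _ ≤ (d:ℝ)^(p/2) := Real.rpow_le_rpow (Real.rpow_nonneg (by positivity) _) hmt
            (by positivity)
    have hlim : (F.card:ℝ) * ε ≤ (d:ℝ)^(p/2) := by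
      have hcont : Filter.Tendsto (fun t : ℝ => (F.card:ℝ) * t)
          (nhdsWithin ε (Set.Iio ε)) (nhds ((F.card:ℝ) * ε)) := by
        apply Filter.Tendsto.const_mul
        exact Filter.tendsto_id.mono_left nhdsWithin_le_nhds
      refine le_of_tendsto hcont ?_
      filter_upwards [Ioo_mem_nhdsLT_of_mem (show ε ∈ Set.Ioc 0 ε from ⟨hε, le_refl ε⟩)]
        with t htt
      exact step t htt.1 htt.2
    rw [le_div_iff₀ hε]
    exact hlim
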